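/- Let σ₀² > 0, η₀² ≥ 0, λ_1 ≥ ... ≥ λ_n ≥ 0, and define σ₀²(η²) = (σ₀²/n) Σ_i (η₀²λ_i + 1)/(η²λ_i + 1). Then for all η², η₀² ≥ 0, |σ₀²(η²) − σ₀²(η₀²)| ≤ σ₀² λ_1 |η² − η₀²|. -/

import Mathlib

/-- Lipschitz continuity of `η² ↦ σ₀²(η²)`: `|σ₀²(η²) − σ₀²(η₀²)| ≤ σ₀² λ₁ |η² − η₀²|`. -/
theorem stmt9 {n : ℕ} (hn : 0 < n) (σ0sq η0sq : ℝ) (hσ : 0 < σ0sq) (hη0 : 0 ≤ η0sq)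
    (lam : Fin n → ℝ) (hdec : Antitone lam) (hnn : ∀ i, 0 ≤ lam i)
    (ηsq : ℝ) (hη : 0 ≤ ηsq) :
    |(σ0sq / n) * ∑ i, (η0sq * lam i + 1) / (ηsq * lam i + 1)
      - (σ0sq / n) * ∑ i, (η0sq * lam i + 1) / (η0sq * lam i + 1)|
      ≤ σ0sq * lam ⟨0, hn⟩ * |ηsq - η0sq| := by
  have hlam1 : ∀ i : Fin n, lam i ≤ lam ⟨0, hn⟩ :=
    fun i => hdec (by simp [Fin.le_def])
  have h1 : ∑ i, (η0sq * lam i + 1) / (η0sq * lam i + 1) = (n : ℝ) := by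
    rw [Finset.sum_congr rfl (fun i _ => div_self (by have := hnn i; positivity))]
    simp
  have hterm : ∀ i : Fin n,
      |(η0sq * lam i + 1) / (ηsq * lam i + 1) - 1| ≤ lam ⟨0, hn⟩ * |ηsq - η0sq| := by
    intro i
    have hl := hnn i
    have hb : 0 < ηsq * lam i + 1 := by positivity
    have heq : (η0sq * lam i + 1) / (ηsq * lam i + 1) - 1
        = (η0sq - ηsq) * lam i / (ηsq * lam i + 1) := by
      field_simp; ring
    rw [heq, abs_div, abs_of_pos hb]
    have h2 : |(η0sq - ηsq) * lam i| = |ηsq - η0sq| * lam i := by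
      rw [abs_mul, abs_of_nonneg hl, abs_sub_comm]
    rw [h2]
    have h3 : |ηsq - η0sq| * lam i / (ηsq * lam i + 1) ≤ |ηsq - η0sq| * lam i := by
      apply div_le_self (by positivity)
      nlinarith
    calc |ηsq - η0sq| * lam i / (ηsq * lam i + 1) ≤ |ηsq - η0sq| * lam i := h3
      _ ≤ lam ⟨0, hn⟩ * |ηsq - η0sq| := by
          rw [mul_comm]
          exact mul_le_mul_of_nonneg_right (hlam1 i) (abs_nonneg _)
  have hsum : |∑ i, ((η0sq * lam i + 1) / (ηsq * lam i + 1) - 1)|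
      ≤ (n : ℝ) * (lam ⟨0, hn⟩ * |ηsq - η0sq|) := by
    calc |∑ i, ((η0sq * lam i + 1) / (ηsq * lam i + 1) - 1)|
        ≤ ∑ i, |(η0sq * lam i + 1) / (ηsq * lam i + 1) - 1| :=
          Finset.abs_sum_le_sum_abs _ _
      _ ≤ ∑ _i : Fin n, lam ⟨0, hn⟩ * |ηsq - η0sq| :=
          Finset.sum_le_sum (fun i _ => hterm i)
      _ = (n : ℝ) * (lam ⟨0, hn⟩ * |ηsq - η0sq|) := by
          simp [Finset.sum_const, mul_comm]
  have hne : (n : ℝ) ≠ 0 := Nat.cast_ne_zero.mpr hn.ne'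
  have hfac : (σ0sq / n) * ∑ i, (η0sq * lam i + 1) / (ηsq * lam i + 1)
      - (σ0sq / n) * ∑ i, (η0sq * lam i + 1) / (η0sq * lam i + 1)
      = (σ0sq / n) * ∑ i, ((η0sq * lam i + 1) / (ηsq * lam i + 1) - 1) := by
    rw [h1, Finset.sum_sub_distrib, Finset.sum_const, Finset.card_univ, Fintype.card_fin]
    ring
  rw [hfac, abs_mul, abs_of_pos (by positivity : (0:ℝ) < σ0sq / n)]
  calc σ0sq / n * |∑ i, ((η0sq * lam i + 1) / (ηsq * lam i + 1) - 1)|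
      ≤ σ0sq / n * ((n : ℝ) * (lam ⟨0, hn⟩ * |ηsq - η0sq|)) :=
        mul_le_mul_of_nonneg_left hsum (by positivity)
    _ = σ0sq * lam ⟨0, hn⟩ * |ηsq - η0sq| := by field_simp
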